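/- arXiv:2111.11619 — 2 statements merged into one kernel-verified Lean document; each statement's English description precedes it below -/
import Mathlib

section
/- Fix real numbers $\omega \neq 0$, $\varepsilon$, and $\iota \in \{0, 1\}$. Define, for $(x,y,u,v) \in \mathbb{R}^4$: $N_1 = \omega y + \frac{\varepsilon}{2} v^2$, $F_1 = -\frac{\varepsilon \sin u \; e^y \cos x}{\omega}$, $P_1 = \varepsilon^2 \cos(u + \frac{\iota \pi}{4}) + \varepsilon \sin u \, \sin x \; e^y$, $[P_1] = \varepsilon^2 \cos(u + \frac{\iota \pi}{4})$, and $P_1' = \frac{\varepsilon^2 \, v \cos u \; e^y \cos x}{\omega}$. Then the homological equation $\{N_1, F_1\} + P_1 - [P_1] - P_1' = 0$ holds identically on $\mathbb{R}^4$. -/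
open Real

/-- The Poisson bracket of two smooth functions of `(x, y, u, v) ∈ ℝ⁴`:
`{F, G} = ∂ₓF ∂_y G − ∂_y F ∂ₓG + ∂ᵤF ∂_v G − ∂_v F ∂ᵤG`. -/
noncomputable def poissonBracket (F G : ℝ → ℝ → ℝ → ℝ → ℝ) (x y u v : ℝ) : ℝ :=
  deriv (fun s => F s y u v) x * deriv (fun s => G x s u v) y
    - deriv (fun s => F x s u v) y * deriv (fun s => G s y u v) x
    + deriv (fun s => F x y s v) u * deriv (fun s => G x y u s) v
    - deriv (fun s => F x y u s) v * deriv (fun s => G x y s v) u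

/-- The homological equation `{N₁, F₁} + P₁ − [P₁] − P₁' = 0` of Example 4.2. -/
theorem homological_equation_example2 (ω ε : ℝ) (hω : ω ≠ 0)
    (ι : ℝ) (hι : ι = 0 ∨ ι = 1) :
    ∀ x y u v : ℝ,
      poissonBracket
          (fun _ y _ v => ω * y + ε / 2 * v ^ 2)
          (fun x y u _ => -(ε * Real.sin u * Real.exp y * Real.cos x) / ω) x y u v
        + (ε ^ 2 * Real.cos (u + ι * π / 4) + ε * Real.sin u * Real.sin x * Real.exp y)
        - ε ^ 2 * Real.cos (u + ι * π / 4)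
        - (ε ^ 2 * v * Real.cos u * Real.exp y * Real.cos x) / ω = 0 := by
  intro x y u v
  unfold poissonBracket
  have hN2 : deriv (fun s : ℝ => ω * s + ε / 2 * v ^ 2) y = ω := by
    have h := ((hasDerivAt_id y).const_mul ω).add_const (ε / 2 * v ^ 2)
    simpa using h.deriv
  have hN4 : deriv (fun s : ℝ => ω * y + ε / 2 * s ^ 2) v = ε * v := by
    have h := ((hasDerivAt_pow 2 v).const_mul (ε / 2)).const_add (ω * y)
    rw [h.deriv]; ring
  have hGx : deriv (fun s : ℝ => -(ε * Real.sin u * Real.exp y * Real.cos s) / ω) x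
      = (ε * Real.sin u * Real.exp y * Real.sin x) / ω := by
    simp [div_eq_mul_inv, deriv_mul_const, deriv_const_mul _ (Real.differentiableAt_cos), Real.deriv_cos]
  have hGu : deriv (fun s : ℝ => -(ε * Real.sin s * Real.exp y * Real.cos x) / ω) u
      = -(ε * Real.cos u * Real.exp y * Real.cos x) / ω := by
    simp [div_eq_mul_inv, mul_assoc, mul_comm, deriv_mul_const]
  rw [hN2, hN4, hGx, hGu]
  simp only [deriv_const]
  field_simp
  ring
end

section
/- Fix real numbers $\omega \neq 0$, $\varepsilon$, $t$, and $\iota \in \{0,1\}$. Define, for $(x,y,u,v) \in \mathbb{R}^4$: $N_1 = \omega y + \frac{\varepsilon}{2} v^2$, $F_1 = -\frac{\varepsilon \sin u \; e^y \cos x}{\omega}$, $P_1 = \varepsilon^2 \cos(u + \frac{\iota \pi}{4}) + \varepsilon \sin u \, \sin x \; e^y$, and $R_t = (1-t)\{N_1, F_1\} + P_1$. Then, identically on $\mathbb{R}^4$, $\{R_t, F_1\} = -\frac{t \, \varepsilon^2 \sin^2 u \; e^{2y}}{\omega} + (1-t) \, \frac{\varepsilon^3 \cos^2 u \; e^{2y}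 \cos^2 x}{\omega^2}$. -/
open Real

lemma inner_eq (ω ε : ℝ) (hω : ω ≠ 0) (x y u v : ℝ) :
    poissonBracket (fun _ y _ v => ω * y + ε / 2 * v ^ 2)
      (fun x y u _ => -(ε * Real.sin u * Real.exp y * Real.cos x) / ω) x y u v
    = ε ^ 2 * v * Real.cos u * Real.exp y * Real.cos x / ω
        - ε * Real.sin u * Real.exp y * Real.sin x := by
  simp only [poissonBracket]
  rw [(((Real.hasDerivAt_cos x).const_mul (ε * Real.sin u * Real.exp y)).fun_neg.div_const ω).deriv]
  rw [((((Real.hasDerivAt_exp y).const_mul (ε * Real.sin u)).mul_const (Real.cos x)).fun_neg.div_const ω).deriv]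
  rw [(((((Real.hasDerivAt_sin u).const_mul ε).mul_const (Real.exp y)).mul_const (Real.cos x)).fun_neg.div_const ω).deriv]
  rw [(((hasDerivAt_id' y).const_mul ω).add_const (ε / 2 * v ^ 2)).deriv]
  rw [(((hasDerivAt_pow 2 v).const_mul (ε / 2)).const_add (ω * y)).deriv]
  simp only [deriv_const']
  field_simp
  ring

/-- The bracket computation `{R_t, F₁}` of Example 4.2:
`{R_t, F₁} = −t ε² sin²u e^{2y}/ω + (1−t) ε³ cos²u e^{2y} cos²x / ω²`. -/
theorem bracket_Rt_F1_example2 (ω ε t : ℝ) (hω : ω ≠ 0)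
    (ι : ℝ) (hι : ι = 0 ∨ ι = 1) :
    ∀ x y u v : ℝ,
      poissonBracket
          (fun x y u v => (1 - t) *
              poissonBracket
                (fun _ y _ v => ω * y + ε / 2 * v ^ 2)
                (fun x y u _ => -(ε * Real.sin u * Real.exp y * Real.cos x) / ω) x y u v
            + (ε ^ 2 * Real.cos (u + ι * π / 4)
                + ε * Real.sin u * Real.sin x * Real.exp y))
          (fun x y u _ => -(ε * Real.sin u * Real.exp y * Real.cos x) / ω) x y u v
        = -(t * ε ^ 2 * Real.sin u ^ 2 * Real.exp (2 * y)) / ω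
          + (1 - t) * ε ^ 3 * Real.cos u ^ 2 * Real.exp (2 * y) * Real.cos x ^ 2 / ω ^ 2 := by
  intro x y u v
  simp only [inner_eq ω ε hω]
  simp only [poissonBracket]
  -- F1 partials
  rw [(((Real.hasDerivAt_cos x).const_mul (ε * Real.sin u * Real.exp y)).fun_neg.div_const ω).deriv]
  rw [((((Real.hasDerivAt_exp y).const_mul (ε * Real.sin u)).mul_const (Real.cos x)).fun_neg.div_const ω).deriv]
  rw [(((((Real.hasDerivAt_sin u).const_mul ε).mul_const (Real.exp y)).mul_const (Real.cos x)).fun_neg.div_const ω).deriv]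
  -- R partials
  rw [((((((Real.hasDerivAt_cos x).const_mul (ε ^ 2 * v * Real.cos u * Real.exp y)).div_const ω).fun_sub
        ((Real.hasDerivAt_sin x).const_mul (ε * Real.sin u * Real.exp y))).const_mul (1 - t)).fun_add
        ((((Real.hasDerivAt_sin x).const_mul (ε * Real.sin u)).mul_const (Real.exp y)).const_add
          (ε ^ 2 * Real.cos (u + ι * π / 4)))).deriv]
  rw [(((((((Real.hasDerivAt_exp y).const_mul (ε ^ 2 * v * Real.cos u)).mul_const (Real.cos x)).div_const ω).fun_sub
        (((Real.hasDerivAt_exp y).const_mul (ε * Real.sin u)).mul_const (Real.sin x))).const_mul (1 - t)).fun_add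
        (((Real.hasDerivAt_exp y).const_mul (ε * Real.sin u * Real.sin x)).const_add
          (ε ^ 2 * Real.cos (u + ι * π / 4)))).deriv]
  have hc : HasDerivAt (fun s : ℝ => Real.cos (s + ι * π / 4)) (-Real.sin (u + ι * π / 4)) u := by
    simpa [Function.comp_def] using (Real.hasDerivAt_cos (u + ι * π / 4)).comp u ((hasDerivAt_id' u).add_const (ι * π / 4))
  rw [((((((((Real.hasDerivAt_cos u).const_mul (ε ^ 2 * v)).mul_const (Real.exp y)).mul_const (Real.cos x)).div_const ω).fun_sub
        ((((Real.hasDerivAt_sin u).const_mul ε).mul_const (Real.exp y)).mul_const (Real.sin x))).const_mul (1 - t)).fun_add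
        ((hc.const_mul (ε ^ 2)).fun_add
          ((((Real.hasDerivAt_sin u).const_mul ε).mul_const (Real.sin x)).mul_const (Real.exp y)))).deriv]
  rw [((((((((hasDerivAt_id' v).const_mul (ε ^ 2)).mul_const (Real.cos u)).mul_const (Real.exp y)).mul_const (Real.cos x)).div_const ω).sub_const
        (ε * Real.sin u * Real.exp y * Real.sin x)).const_mul (1 - t)).add_const
        (ε ^ 2 * Real.cos (u + ι * π / 4) + ε * Real.sin u * Real.sin x * Real.exp y) |>.deriv]
  simp only [deriv_const']
  rw [show (2 : ℝ) * y = y + y by ring, Real.exp_add]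
  field_simp
  ring_nf
  rw [Real.sin_sq x]
  ring
end
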